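/- Let E ∈ C³(ℝ²), E_ijk = ∇³E(0)[e_i, e_j, e_k], and define A = [[(E111 − E122)/2, (E112 − E222)/2], [E112, E122]]. Then for every x ∈ ℝ², the 2×2 matrix ∇³E(0)[x] decomposes as ∇³E(0)[x] = c(x) I + Q_{Ax}, where c(x) ∈ ℝ is half the trace of ∇³E(0)[x]. Moreover det A = Δ/2, where Δ = E111 E122 + E112 E222 − E112² − E122². -/

import Mathlib

open Real

noncomputable section

abbrev Vec (N : ℕ) := EuclideanSpace ℝ (Fin N)

/-- canonical basis vectors of `ℝ²`. -/
def e2 (i : Fin 2) : Vec 2 := EuclideanSpace.single i 1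

/-- third partial derivatives `E_ijk = ∇³E(0)[e_i, e_j, e_k]`. -/
def D3 (E : Vec 2 → ℝ) (i j k : Fin 2) : ℝ :=
  iteratedFDeriv ℝ 3 E 0 ![e2 i, e2 j, e2 k]

/-- the contracted matrix `∇³E(0)[x]`, with entries `(∇³E(0)[x])_ij = Σ_k E_ijk x_k`. -/
def Tmat (E : Vec 2 → ℝ) (x : Vec 2) : Matrix (Fin 2) (Fin 2) ℝ :=
  Matrix.of fun i j => ∑ k : Fin 2, D3 E i j k * x k

/-- the matrix `A = [[(E111 - E122)/2, (E112 - E222)/2], [E112, E122]]`. -/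
def Amat (E : Vec 2 → ℝ) : Matrix (Fin 2) (Fin 2) ℝ :=
  !![(D3 E 0 0 0 - D3 E 0 1 1) / 2, (D3 E 0 0 1 - D3 E 1 1 1) / 2;
     D3 E 0 0 1, D3 E 0 1 1]

/-- the symmetric matrix `Q_(a,b) = [[a, b], [b, -a]]`. -/
def Qm (a b : ℝ) : Matrix (Fin 2) (Fin 2) ℝ := !![a, b; b, -a]

end

section auxlemmas

variable {E : Vec 2 → ℝ}

lemma D3_eq (u v w : Vec 2) :
    iteratedFDeriv ℝ 3 E 0 ![u, v, w]
      = fderiv ℝ (fderiv ℝ (fderiv ℝ E)) 0 u v w := by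
  rw [iteratedFDeriv_succ_apply_right, iteratedFDeriv_two_apply]
  rfl

lemma D3_swap12 (hE : ContDiff ℝ 3 E) (i j k : Fin 2) : D3 E i j k = D3 E j i k := by
  have h1 : ContDiff ℝ 2 (fderiv ℝ E) := hE.fderiv_right (by norm_num)
  have hf : ∀ y, HasFDerivAt (fderiv ℝ E) (fderiv ℝ (fderiv ℝ E) y) y := fun y =>
    ((h1.differentiable (by norm_num)) y).hasFDerivAt
  have h2 : ContDiff ℝ 1 (fderiv ℝ (fderiv ℝ E)) := h1.fderiv_right (by norm_num)
  have hx : HasFDerivAt (fderiv ℝ (fderiv ℝ E)) (fderiv ℝ (fderiv ℝ (fderiv ℝ E)) 0) 0 :=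
    ((h2.differentiable (by norm_num)) 0).hasFDerivAt
  have hsymm := second_derivative_symmetric hf hx (e2 i) (e2 j)
  unfold D3
  rw [D3_eq, D3_eq, hsymm]

lemma iteratedFDeriv_two_symm (hE : ContDiff ℝ 3 E) (y : Vec 2) (v w : Vec 2) :
    iteratedFDeriv ℝ 2 E y ![v, w] = iteratedFDeriv ℝ 2 E y ![w, v] := by
  have hf : ∀ z, HasFDerivAt E (fderiv ℝ E z) z := fun z =>
    ((hE.differentiable (by norm_num)) z).hasFDerivAt
  have h1 : ContDiff ℝ 2 (fderiv ℝ E) := hE.fderiv_right (by norm_num)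
  have hx : HasFDerivAt (fderiv ℝ E) (fderiv ℝ (fderiv ℝ E) y) y :=
    ((h1.differentiable (by norm_num)) y).hasFDerivAt
  have := second_derivative_symmetric hf hx v w
  rw [iteratedFDeriv_two_apply, iteratedFDeriv_two_apply]
  simpa using this

lemma D3_swap23 (hE : ContDiff ℝ 3 E) (i j k : Fin 2) : D3 E i j k = D3 E i k j := by
  have hF : DifferentiableAt ℝ (iteratedFDeriv ℝ 2 E) 0 :=
    ((hE.iteratedFDeriv_right (m := 1) (i := 2) (by norm_num)).differentiable (by norm_num)) 0
  have main : ∀ v w : Fin 2, D3 E i v w =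
      fderiv ℝ (fun y => iteratedFDeriv ℝ 2 E y ![e2 v, e2 w]) 0 (e2 i) := by
    intro v w
    have hΦ := (ContinuousMultilinearMap.apply ℝ (fun _ : Fin 2 => Vec 2) ℝ
      ![e2 v, e2 w]).hasFDerivAt (x := iteratedFDeriv ℝ 2 E 0)
    have hcomp := (hΦ.comp 0 hF.hasFDerivAt).fderiv
    have h1 : D3 E i v w = fderiv ℝ (iteratedFDeriv ℝ 2 E) 0 (e2 i) ![e2 v, e2 w] := by
      unfold D3
      rw [iteratedFDeriv_succ_apply_left]
      rfl
    rw [h1]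
    show _ = fderiv ℝ ((ContinuousMultilinearMap.apply ℝ (fun _ : Fin 2 => Vec 2) ℝ
      ![e2 v, e2 w]) ∘ iteratedFDeriv ℝ 2 E) 0 (e2 i)
    rw [hcomp]
    rfl
  rw [main j k, main k j]
  have hfun : (fun y => iteratedFDeriv ℝ 2 E y ![e2 j, e2 k])
      = (fun y => iteratedFDeriv ℝ 2 E y ![e2 k, e2 j]) :=
    funext fun y => iteratedFDeriv_two_symm hE y (e2 j) (e2 k)
  rw [hfun]

end auxlemmas

/-- For `E ∈ C³(ℝ²)`, the matrix `∇³E(0)[x]` decomposes as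
`c(x) I + Q_{Ax}` where `c(x)` is half the trace of `∇³E(0)[x]`, and `det A = Δ/2`. -/
theorem stmt12 (E : Vec 2 → ℝ) (hE : ContDiff ℝ 3 E)
    (Δ : ℝ)
    (hΔ : Δ = D3 E 0 0 0 * D3 E 0 1 1 + D3 E 0 0 1 * D3 E 1 1 1
            - (D3 E 0 0 1) ^ 2 - (D3 E 0 1 1) ^ 2) :
    (∀ x : Vec 2,
      Tmat E x = ((Tmat E x).trace / 2) • (1 : Matrix (Fin 2) (Fin 2) ℝ)
        + Qm ((Amat E).mulVec (fun i => x i) 0) ((Amat E).mulVec (fun i => x i) 1)) ∧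
    (Amat E).det = Δ / 2 := by
  have h010 : D3 E 0 1 0 = D3 E 0 0 1 := D3_swap23 hE 0 1 0
  have h100 : D3 E 1 0 0 = D3 E 0 0 1 := (D3_swap12 hE 1 0 0).trans h010
  have h101 : D3 E 1 0 1 = D3 E 0 1 1 := D3_swap12 hE 1 0 1
  have h110 : D3 E 1 1 0 = D3 E 0 1 1 := (D3_swap23 hE 1 1 0).trans h101
  constructor
  · intro x
    ext i j
    fin_cases i <;> fin_cases j <;>
      simp [Tmat, Qm, Amat, Matrix.trace, Matrix.mulVec, dotProduct, Matrix.vecHead, Matrix.vecTail,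
        Fin.sum_univ_two, Matrix.one_apply, h010, h100, h101, h110] <;> ring
  · rw [Amat, Matrix.det_fin_two_of, hΔ]; ring
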